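/- Let P be a poset with least element 0 and Z(P)^× ≠ ∅, and let x, y ∈ Z(P)^×. If ann(x) ∪ ann(y) ⊆ ann(z) for some z ∈ P such that ann(z) is an annihilator prime ideal of P, then L(x,y) ≠ {0} (i.e., [x] and [y] are not adjacent in Γ_E(P)). Conversely, if P satisfies the ascending chain condition for annihilators and L(x,y) ≠ {0}, then there exists z ∈ P with ann(z) an annihilator prime ideal of P such that ann(x) ∪ ann(y) ⊆ ann(z). -/

import Mathlib

/-- `L(x,y) = {z : z ≤ x ∧ z ≤ y}`, where the least element `0` of the poset is `⊥`. -/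
def LSet (P : Type*) [PartialOrder P] [OrderBot P] (x y : P) : Set P := {z | z ≤ x ∧ z ≤ y}

theorem LSet_comm (P : Type*) [PartialOrder P] [OrderBot P] (x y : P) :
    LSet P x y = LSet P y x := by
  ext z; exact ⟨fun h => ⟨h.2, h.1⟩, fun h => ⟨h.2, h.1⟩⟩

/-- The annihilator of `x`: `ann(x) = {y : L(x,y) = {0}}`. -/
def ann (P : Type*) [PartialOrder P] [OrderBot P] (x : P) : Set P := {y | LSet P x y = {⊥}}

theorem mem_ann_comm (P : Type*) [PartialOrder P] [OrderBot P] (x y : P) :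
    y ∈ ann P x ↔ x ∈ ann P y := by
  simp only [ann, Set.mem_setOf_eq, LSet_comm P x y]

/-- The set `Z(P)^× = Z(P) \ {0}` of nonzero zero-divisors of `P`. -/
def ZDivX (P : Type*) [PartialOrder P] [OrderBot P] : Set P :=
  {x | x ≠ ⊥ ∧ ∃ y : P, y ≠ ⊥ ∧ LSet P x y = {⊥}}

/-- The zero-divisor graph `Γ(P)` on `Z(P)^×`. -/
def zdGraph (P : Type*) [PartialOrder P] [OrderBot P] : SimpleGraph (ZDivX P) where
  Adj a b := (a : P) ≠ (b : P) ∧ LSet P a b = {⊥}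
  symm := by
    constructor
    rintro a b ⟨h1, h2⟩
    exact ⟨fun h => h1 h.symm, by rw [LSet_comm]; exact h2⟩
  loopless := by constructor; rintro a ⟨h1, _⟩; exact h1 rfl

/-- The equivalence `x ∼ y ↔ ann(x) = ann(y)` on `Z(P)^×`. -/
def annSetoid (P : Type*) [PartialOrder P] [OrderBot P] : Setoid (ZDivX P) where
  r a b := ann P a = ann P b
  iseqv := ⟨fun _ => rfl, Eq.symm, Eq.trans⟩

/-- The reduced zero-divisor graph `Γ_E(P)`, on equivalence classes of `Z(P)^×`. -/
def redGraph (P : Type*) [PartialOrder P] [OrderBot P] :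
    SimpleGraph (Quotient (annSetoid P)) where
  Adj := Quotient.lift₂ (fun a b => LSet P (a : P) (b : P) = {⊥}) (by
    intro a b a' b' ha hb
    have ha' : ann P (a : P) = ann P (a' : P) := ha
    have hb' : ann P (b : P) = ann P (b' : P) := hb
    apply propext
    constructor
    · intro h
      have h1 : (b : P) ∈ ann P (a : P) := h
      rw [ha', mem_ann_comm, hb', mem_ann_comm] at h1
      exact h1
    · intro h
      have h1 : (b' : P) ∈ ann P (a' : P) := h
      rw [← ha', mem_ann_comm, ← hb', mem_ann_comm] at h1
      exact h1)
  symm := by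
    constructor
    intro x y
    refine Quotient.inductionOn₂ x y ?_
    intro a b h
    have h' : LSet P (a : P) (b : P) = {⊥} := h
    show LSet P (b : P) (a : P) = {⊥}
    rw [LSet_comm]; exact h'
  loopless := by
    constructor
    intro x
    refine Quotient.inductionOn x ?_
    intro a h
    have h' : LSet P (a : P) (a : P) = {⊥} := h
    have hm : (a : P) ∈ LSet P (a : P) (a : P) := ⟨le_refl _, le_refl _⟩
    rw [h'] at hm
    exact a.2.1 hm
/-- `I` is an ideal of the poset `P`: a nonempty downward-closed subset. -/
def IsIdeal (P : Type*) [PartialOrder P] [OrderBot P] (I : Set P) : Prop :=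
  I.Nonempty ∧ ∀ x ∈ I, ∀ y : P, y ≤ x → y ∈ I

/-- `I` is a prime ideal of the poset `P`: a proper ideal such that
`L(x,y) ⊆ I` implies `x ∈ I` or `y ∈ I`. -/
def IsPrimeIdeal (P : Type*) [PartialOrder P] [OrderBot P] (I : Set P) : Prop :=
  IsIdeal P I ∧ I ≠ Set.univ ∧ ∀ x y : P, LSet P x y ⊆ I → x ∈ I ∨ y ∈ I

/-- The family `𝔄 = {ann(x) : x ∈ P \ {0}}`. -/
def AnnFam (P : Type*) [PartialOrder P] [OrderBot P] : Set (Set P) :=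
  {I | ∃ x : P, x ≠ ⊥ ∧ ann P x = I}

/-- `Ann(P)`, the set of annihilator prime ideals of `P`. -/
def AnnPrimes (P : Type*) [PartialOrder P] [OrderBot P] : Set (Set P) :=
  {I | IsPrimeIdeal P I ∧ ∃ x : P, ann P x = I}

/-- `P` satisfies the ACC for annihilators: every nonempty subfamily of `𝔄` has a
maximal element. -/
def ACCAnn (P : Type*) [PartialOrder P] [OrderBot P] : Prop :=
  ∀ S : Set (Set P), S ⊆ AnnFam P → S.Nonempty → ∃ I ∈ S, ∀ J ∈ S, I ⊆ J → I = J

section Aux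
variable {P : Type*} [PartialOrder P] [OrderBot P]

lemma bot_mem_LSet (x y : P) : (⊥ : P) ∈ LSet P x y := ⟨bot_le, bot_le⟩

lemma LSet_eq_iff {x y : P} : LSet P x y = {⊥} ↔ ∀ z : P, z ≤ x → z ≤ y → z = ⊥ := by
  rw [Set.eq_singleton_iff_unique_mem]
  exact ⟨fun h z hx hy => h.2 z ⟨hx, hy⟩,
    fun h => ⟨bot_mem_LSet x y, fun z hz => h z hz.1 hz.2⟩⟩

lemma mem_ann_iff {x a : P} : a ∈ ann P x ↔ ∀ z : P, z ≤ x → z ≤ a → z = ⊥ := LSet_eq_iff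

lemma ann_mono {w x : P} (h : w ≤ x) : ann P x ⊆ ann P w := by
  intro a ha
  rw [mem_ann_iff] at ha ⊢
  exact fun z hz hza => ha z (hz.trans h) hza

lemma bot_mem_ann (x : P) : (⊥ : P) ∈ ann P x :=
  mem_ann_iff.2 fun z _ hz => le_bot_iff.1 hz

lemma ann_down {x a b : P} (ha : a ∈ ann P x) (hba : b ≤ a) : b ∈ ann P x := by
  rw [mem_ann_iff] at ha ⊢
  exact fun z hz hzb => ha z hz (hzb.trans hba)

lemma not_mem_ann_self {x : P} (hx : x ≠ ⊥) : x ∉ ann P x := by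
  intro h
  exact hx (mem_ann_iff.1 h x le_rfl le_rfl)

end Aux

/-- If `ann(x) ∪ ann(y) ⊆ ann(z)` for some annihilator prime ideal `ann(z)`, then
`L(x,y) ≠ {0}`; conversely, if `P` satisfies the ACC for annihilators and
`L(x,y) ≠ {0}`, then such an annihilator prime ideal `ann(z)` exists. -/
theorem stmt12 (P : Type*) [PartialOrder P] [OrderBot P] (hZ : (ZDivX P).Nonempty)
    (x y : ZDivX P) :
    ((∃ z : P, IsPrimeIdeal P (ann P z) ∧ ann P (x : P) ∪ ann P (y : P) ⊆ ann P z) →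
        LSet P (x : P) (y : P) ≠ {⊥}) ∧
    (ACCAnn P → LSet P (x : P) (y : P) ≠ {⊥} →
      ∃ z : P, IsPrimeIdeal P (ann P z) ∧ ann P (x : P) ∪ ann P (y : P) ⊆ ann P z) := by
  constructor
  · rintro ⟨z, hprime, hsub⟩ h
    have hyx : (y : P) ∈ ann P (x : P) := h
    have hyz : (y : P) ∈ ann P z := hsub (Or.inl hyx)
    have hzy : z ∈ ann P (y : P) := (mem_ann_comm P z (y : P)).1 hyz
    have hzz : z ∈ ann P z := hsub (Or.inr hzy)
    have hz : z = ⊥ := by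
      by_contra hz
      exact not_mem_ann_self hz hzz
    subst hz
    apply hprime.2.1
    ext a
    simp only [Set.mem_univ, iff_true]
    exact mem_ann_iff.2 fun s hs _ => le_bot_iff.1 hs
  · intro hacc h
    -- obtain a nonzero element w ≤ x, w ≤ y
    rw [Ne, LSet_eq_iff] at h
    push_neg at h
    obtain ⟨w, hwx, hwy, hw⟩ := h
    set S : Set (Set P) := {I | ∃ v : P, v ≠ ⊥ ∧ ann P v = I ∧ ann P w ⊆ I} with hS
    have hSsub : S ⊆ AnnFam P := by rintro I ⟨v, hv, hvI, _⟩; exact ⟨v, hv, hvI⟩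
    have hSne : S.Nonempty := ⟨ann P w, w, hw, rfl, subset_rfl⟩
    obtain ⟨I, hIS, hImax⟩ := hacc S hSsub hSne
    obtain ⟨z, hz, hzI, hwI⟩ := hIS
    subst hzI
    refine ⟨z, ⟨⟨⟨⊥, bot_mem_ann z⟩, fun a ha b hb => ann_down ha hb⟩, ?_, ?_⟩, ?_⟩
    · intro huniv
      exact not_mem_ann_self hz (huniv ▸ Set.mem_univ z)
    · -- primality
      intro a b hab
      by_contra hcon
      push_neg at hcon
      obtain ⟨ha, hb⟩ := hcon
      -- a ∉ ann z : get nonzero t ≤ z, t ≤ a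
      rw [mem_ann_comm, mem_ann_iff] at ha
      push_neg at ha
      obtain ⟨t, hta, htz, ht⟩ := ha
      have hzt : ann P z ⊆ ann P t := ann_mono htz
      have htS : ann P t ∈ S := ⟨t, ht, rfl, hwI.trans hzt⟩
      have heq : ann P z = ann P t := hImax _ htS hzt
      apply hb
      rw [heq]
      rw [mem_ann_iff]
      intro s hst hsb
      have hsann : s ∈ ann P z := hab ⟨hst.trans hta, hsb⟩
      exact mem_ann_iff.1 hsann s (hst.trans htz) le_rfl
    · exact Set.union_subset ((ann_mono hwx).trans hwI) ((ann_mono hwy).trans hwI)
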